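/- Let E ∈ Mₙ(R) and F ∈ M_m(R) be idempotent matrices such that the left R-modules Rⁿ·E and R^m·F are isomorphic. Then Tr(E) − Tr(F) ∈ [R,R]; equivalently, Tr(E) and Tr(F) have the same image in the quotient group R/[R,R]. -/

import Mathlib

/-- The image `Rⁿ·E` of right multiplication by a matrix `E` on the left `R`-module of row
vectors, as a submodule of `Fin n → R`. -/
def rowImage {R : Type*} [Ring R] {n : ℕ} (E : Matrix (Fin n) (Fin n) R) :
    Submodule R (Fin n → R) where
  carrier := {x | ∃ y : Fin n → R, Matrix.vecMul y E = x}
  add_mem' := by rintro a b ⟨y, rfl⟩ ⟨z, rfl⟩; exact ⟨y + z, Matrix.add_vecMul E y z⟩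
  zero_mem' := ⟨0, Matrix.zero_vecMul E⟩
  smul_mem' := by rintro r a ⟨y, rfl⟩; exact ⟨r • y, Matrix.smul_vecMul r y E⟩

section Aux

variable {R : Type*} [Ring R]

/-- The projection `x ↦ x·E` onto `rowImage E`, as a linear map. -/
def rowProj {n : ℕ} (E : Matrix (Fin n) (Fin n) R) :
    (Fin n → R) →ₗ[R] rowImage E where
  toFun x := ⟨Matrix.vecMul x E, ⟨x, rfl⟩⟩
  map_add' x y := Subtype.ext (Matrix.add_vecMul E x y)
  map_smul' r x := Subtype.ext (Matrix.smul_vecMul r x E)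

lemma rowImage_fixed {n : ℕ} {E : Matrix (Fin n) (Fin n) R} (hE : E * E = E)
    {x : Fin n → R} (hx : x ∈ rowImage E) : Matrix.vecMul x E = x := by
  obtain ⟨y, rfl⟩ := hx
  rw [Matrix.vecMul_vecMul, hE]

lemma linearMap_apply_eq_sum {n m : ℕ} (γ : (Fin n → R) →ₗ[R] (Fin m → R))
    (y : Fin n → R) (j : Fin m) :
    γ y j = ∑ i, y i * γ (Pi.single i 1) j := by
  have hy : y = ∑ i, y i • (Pi.single i (1 : R) : Fin n → R) := by
    funext k
    simp [Finset.sum_apply, Pi.single_apply, mul_ite, Finset.sum_ite_eq' Finset.univ k]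
  conv_lhs => rw [hy]
  rw [map_sum]
  simp [Finset.sum_apply]

end Aux


/-- (Hattori–Stallings.) If idempotent matrices `E ∈ Mₙ(R)` and `F ∈ Mₘ(R)` have isomorphic
image left `R`-modules `Rⁿ·E ≅ Rᵐ·F`, then `Tr E − Tr F` lies in the additive subgroup
`[R,R]` generated by commutators. -/
theorem stmt_8 {R : Type*} [Ring R] {n m : ℕ}
    (E : Matrix (Fin n) (Fin n) R) (F : Matrix (Fin m) (Fin m) R)
    (hE : E * E = E) (hF : F * F = F)
    (h : Nonempty (rowImage E ≃ₗ[R] rowImage F)) :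
    Matrix.trace E - Matrix.trace F ∈
      AddSubgroup.closure {z : R | ∃ x y : R, z = x * y - y * x} := by
  obtain ⟨φ⟩ := h
  set α : (Fin n → R) →ₗ[R] (Fin m → R) :=
    (rowImage F).subtype ∘ₗ φ.toLinearMap ∘ₗ rowProj E with hα
  set β : (Fin m → R) →ₗ[R] (Fin n → R) :=
    (rowImage E).subtype ∘ₗ φ.symm.toLinearMap ∘ₗ rowProj F with hβ
  set A : Matrix (Fin n) (Fin m) R := fun i j => α (Pi.single i 1) j with hA
  set B : Matrix (Fin m) (Fin n) R := fun j i => β (Pi.single j 1) i with hB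
  have hvA : ∀ y, Matrix.vecMul y A = α y := by
    intro y; funext j
    rw [linearMap_apply_eq_sum α y j]
    simp [Matrix.vecMul, dotProduct, hA]
  have hvB : ∀ y, Matrix.vecMul y B = β y := by
    intro y; funext i
    rw [linearMap_apply_eq_sum β y i]
    simp [Matrix.vecMul, dotProduct, hB]
  -- β ∘ α = ·E
  have hβα : ∀ y, β (α y) = Matrix.vecMul y E := by
    intro y
    have hmem : α y ∈ rowImage F := (φ (rowProj E y)).2
    have hfix : Matrix.vecMul (α y) F = α y := rowImage_fixed hF hmem
    have h1 : rowProj F (α y) = φ (rowProj E y) := Subtype.ext hfix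
    show (rowImage E).subtype (φ.symm (rowProj F (α y))) = _
    rw [h1, φ.symm_apply_apply]
    rfl
  have hαβ : ∀ y, α (β y) = Matrix.vecMul y F := by
    intro y
    have hmem : β y ∈ rowImage E := (φ.symm (rowProj F y)).2
    have hfix : Matrix.vecMul (β y) E = β y := rowImage_fixed hE hmem
    have h1 : rowProj E (β y) = φ.symm (rowProj F y) := Subtype.ext hfix
    show (rowImage F).subtype (φ (rowProj E (β y))) = _
    rw [h1, φ.apply_symm_apply]
    rfl
  have hAB : A * B = E := by
    funext i k
    have := hβα (Pi.single i 1)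
    rw [← hvA, ← hvB, Matrix.vecMul_vecMul] at this
    have := congrFun this k
    simpa [Matrix.vecMul, dotProduct, Pi.single_apply, ite_mul,
      Finset.sum_ite_eq Finset.univ i] using this
  have hBA : B * A = F := by
    funext j k
    have := hαβ (Pi.single j 1)
    rw [← hvB, ← hvA, Matrix.vecMul_vecMul] at this
    have := congrFun this k
    simpa [Matrix.vecMul, dotProduct, Pi.single_apply, ite_mul,
      Finset.sum_ite_eq Finset.univ j] using this
  have key : Matrix.trace E - Matrix.trace F
      = ∑ i : Fin n, ∑ j : Fin m, (A i j * B j i - B j i * A i j) := by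
    rw [← hAB, ← hBA]
    simp only [Matrix.trace, Matrix.diag, Matrix.mul_apply, Finset.sum_sub_distrib]
    congr 1
    exact Finset.sum_comm
  rw [key]
  refine AddSubgroup.sum_mem _ fun i _ => AddSubgroup.sum_mem _ fun j _ => ?_
  exact AddSubgroup.subset_closure ⟨A i j, B j i, rfl⟩
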